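/- Let (ψ,φ) be a reproducing pair of weakly measurable functions X → H and Ĉ_{ψ,φ}f := [⟨f,ψ(·)⟩]_φ ∈ V_φ(X,μ). Then: (i) there exist constants m, M > 0 such that m‖f‖ ≤ ‖Ĉ_{ψ,φ}f‖_φ ≤ M‖f‖ for all f ∈ H (one may take m = ‖S_{ψ,φ}^{-1}‖^{-1} and M = ‖S_{ψ,φ}‖); consequently the range of Ĉ_{ψ,φ} is a closed subspace of V_φ(X,μ); (ii) every class [η]_ψ ∈ V_ψ(X,μ) defines a bounded linear functional on the closed subspace Ran Ĉ_{ψ,φ} via [⟨f,ψ(·)⟩]_φ ↦ ∫_X ⟨f,ψ(x)⟩ conj(η(x)) dμ(x), with |∫_X ⟨f,ψ(x)⟩ conj(η(x)) dμ(x)| ≤ ‖S_{ψ,φ}^{-1}‖ · ‖Ĉ_{ψ,φ}f‖_φ · ‖[η]_ψ‖_ψ for all f ∈ H. -/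

import Mathlib

open MeasureTheory Filter Topology
open scoped Classical ENNReal NNReal

noncomputable section

variable {H : Type*} [NormedAddCommGroup H] [InnerProductSpace ℂ H] [CompleteSpace H]
  [TopologicalSpace.SeparableSpace H]
variable {X : Type*} [TopologicalSpace X] [LocallyCompactSpace X] [MeasurableSpace X]
  [BorelSpace X]

/-- Notation for the Mathlib inner product (conjugate-linear in the first slot);
the paper's inner product `⟨f, g⟩` (linear in the first slot) is `⟪g, f⟫`. -/
local notation "⟪" x ", " y "⟫" => @inner ℂ _ _ x y

/-- `φ : X → H` is weakly measurable: `x ↦ ⟨f, φ x⟩` is measurable for every `f ∈ H`. -/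
def WeaklyMeasurable (φ : X → H) : Prop :=
  ∀ f : H, Measurable fun x => ⟪φ x, f⟫

/-- `ξ ∈ 𝒱_φ(X,μ)`: `ξ` is measurable, the integral `∫ ξ(x) ⟨φ(x), g⟩ dμ(x)` exists for all
`g ∈ H`, and it defines a bounded conjugate-linear functional of `g`. -/
def MemV (μ : Measure X) (φ : X → H) (ξ : X → ℂ) : Prop :=
  Measurable ξ ∧ (∀ g : H, Integrable (fun x => ξ x * ⟪g, φ x⟫) μ) ∧
    ∃ c : ℝ, ∀ g : H, ‖∫ x, ξ x * ⟪g, φ x⟫ ∂μ‖ ≤ c * ‖g‖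

/-- The map `T_φ : 𝒱_φ(X,μ) → H`, determined weakly by
`⟨T_φ ξ, g⟩ = ∫ ξ(x) ⟨φ(x), g⟩ dμ(x)` for all `g ∈ H` (junk value `0` off `𝒱_φ`). -/
def Tmap (μ : Measure X) (φ : X → H) (ξ : X → ℂ) : H :=
  if h : MemV μ φ ξ then
    have key : ∀ g : H, Integrable (fun x => (starRingEnd ℂ) (ξ x) * ⟪φ x, g⟫) μ := by
      intro g
      have h2 : Integrable (fun x => (RCLike.conjLIE : ℂ ≃ₗᵢ[ℝ] ℂ) (ξ x * ⟪g, φ x⟫)) μ :=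
        ((RCLike.conjLIE : ℂ ≃ₗᵢ[ℝ] ℂ).integrable_comp_iff).2 (h.2.1 g)
      simpa [RCLike.conjLIE_apply, map_mul] using h2
    (InnerProductSpace.toDual ℂ H).symm
      (LinearMap.mkContinuousOfExistsBound
        { toFun := fun g => ∫ x, (starRingEnd ℂ) (ξ x) * ⟪φ x, g⟫ ∂μ
          map_add' := fun g g' => by
            simp only [inner_add_right, mul_add]
            exact integral_add (key g) (key g')
          map_smul' := fun c g => by
            simp only [inner_smul_right, RingHom.id_apply]
            calc ∫ x, (starRingEnd ℂ) (ξ x) * (c * ⟪φ x, g⟫) ∂μ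
                = ∫ x, c * ((starRingEnd ℂ) (ξ x) * ⟪φ x, g⟫) ∂μ := by
                  simp only [mul_left_comm]
              _ = c * ∫ x, (starRingEnd ℂ) (ξ x) * ⟪φ x, g⟫ ∂μ := integral_const_mul .. }
        (by
          obtain ⟨c, hc⟩ := h.2.2
          refine ⟨c, fun g => ?_⟩
          have he : ∫ x, (starRingEnd ℂ) (ξ x) * ⟪φ x, g⟫ ∂μ
              = (starRingEnd ℂ) (∫ x, ξ x * ⟪g, φ x⟫ ∂μ) := by
            rw [← integral_conj]
            congr 1; funext x
            simp [map_mul]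
          simp only [LinearMap.coe_mk, AddHom.coe_mk]
          rw [he, RCLike.norm_conj]
          exact hc g))
  else 0

/-- The norm `‖[ξ]_φ‖_φ = sup_{‖g‖ ≤ 1} |∫ ξ(x) ⟨φ(x), g⟩ dμ(x)|` (computed on a
representative; it only depends on the class `[ξ]_φ = ξ + Ker T_φ`). -/
def Vnorm (μ : Measure X) (φ : X → H) (ξ : X → ℂ) : ℝ :=
  ⨆ g : {g : H // ‖g‖ ≤ 1}, ‖∫ x, ξ x * ⟪(g : H), φ x⟫ ∂μ‖

/-- The range of `T̂_φ : V_φ(X,μ) → H` (equivalently, of `T_φ` on `𝒱_φ(X,μ)`). -/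
def Tran (μ : Measure X) (φ : X → H) : Set H := Tmap μ φ '' {ξ | MemV μ φ ξ}

/-- The analysis coefficient map: `(C_ψ f)(x) = ⟨f, ψ(x)⟩`. -/
def Cpsi (ψ : X → H) (f : H) : X → ℂ := fun x => ⟪ψ x, f⟫

/-- `φ` is `μ`-total: `Ker C_φ = {0}`, i.e. if `∫ ξ(x) ⟨φ(x), f⟩ dμ(x) = 0` for every
`ξ ∈ 𝒱_φ(X,μ)`, then `f = 0`. -/
def MuTotal (μ : Measure X) (φ : X → H) : Prop :=
  ∀ f : H, (∀ ξ, MemV μ φ ξ → ∫ x, ξ x * ⟪f, φ x⟫ ∂μ = 0) → f = 0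

/-- `S : H ≃L[ℂ] H` represents the sesquilinear form `Ω_{ψ,φ}`:
`⟨S f, g⟩ = ∫ ⟨f, ψ(x)⟩ ⟨φ(x), g⟩ dμ(x)` for all `f, g ∈ H`. -/
def IsAnalysisOp (μ : Measure X) (ψ φ : X → H) (S : H ≃L[ℂ] H) : Prop :=
  ∀ f g : H, ⟪g, S f⟫ = ∫ x, ⟪ψ x, f⟫ * ⟪g, φ x⟫ ∂μ

/-- `(ψ, φ)` is a reproducing pair: both weakly measurable, the form
`Ω_{ψ,φ}(f,g) = ∫ ⟨f,ψ(x)⟩⟨φ(x),g⟩ dμ(x)` is well defined (integrable) and bounded, and the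
associated bounded operator `S_{ψ,φ}` has a bounded everywhere-defined inverse. -/
def IsReproducingPair (μ : Measure X) (ψ φ : X → H) : Prop :=
  WeaklyMeasurable ψ ∧ WeaklyMeasurable φ ∧
    (∀ f g : H, Integrable (fun x => ⟪ψ x, f⟫ * ⟪g, φ x⟫) μ) ∧
    ∃ S : H ≃L[ℂ] H, IsAnalysisOp μ ψ φ S

/-- Completeness of `V_φ(X,μ)` in the norm `‖·‖_φ`, phrased via representatives:
every `‖·‖_φ`-Cauchy sequence of elements of `𝒱_φ(X,μ)` converges in `‖·‖_φ`
to an element of `𝒱_φ(X,μ)`. -/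
def VComplete (μ : Measure X) (φ : X → H) : Prop :=
  ∀ ξ : ℕ → X → ℂ, (∀ n, MemV μ φ (ξ n)) →
    (∀ ε : ℝ, 0 < ε → ∃ N, ∀ m ≥ N, ∀ n ≥ N, Vnorm μ φ (ξ m - ξ n) < ε) →
    ∃ η, MemV μ φ η ∧ Tendsto (fun n => Vnorm μ φ (ξ n - η)) atTop (𝓝 0)

/-- `F` is (induced by) a bounded linear functional on `V_φ(X,μ)`: it is linear on `𝒱_φ(X,μ)`,
constant on the classes of `V_φ(X,μ) = 𝒱_φ(X,μ)/Ker T_φ`, and bounded for `‖·‖_φ`. -/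
def IsBddLinearFunctional (μ : Measure X) (φ : X → H) (F : (X → ℂ) → ℂ) : Prop :=
  (∀ ξ η, MemV μ φ ξ → MemV μ φ η → F (ξ + η) = F ξ + F η) ∧
  (∀ (c : ℂ) ξ, MemV μ φ ξ → F (c • ξ) = c * F ξ) ∧
  (∀ ξ η, MemV μ φ ξ → MemV μ φ η → Tmap μ φ (ξ - η) = 0 → F ξ = F η) ∧
  ∃ c : ℝ, ∀ ξ, MemV μ φ ξ → ‖F ξ‖ ≤ c * Vnorm μ φ ξ

/-- The dual norm `‖F‖_{φ*} = sup_{‖[ξ]_φ‖_φ ≤ 1} |F([ξ]_φ)|`. -/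
def DualNorm (μ : Measure X) (φ : X → H) (F : (X → ℂ) → ℂ) : ℝ :=
  ⨆ ξ : {ξ : X → ℂ // MemV μ φ ξ ∧ Vnorm μ φ ξ ≤ 1}, ‖F ξ.1‖

/-- `V_φ(X,μ)` and `V_ψ(X,μ)` are conjugate dual to each other with respect to the pairing
`⟨⟨ξ, η⟩⟩ = ∫ ξ(x) conj(η(x)) dμ(x)`: the pairing is well defined, each class `[η]_ψ` gives a
bounded linear functional on `V_φ(X,μ)`, and `[η]_ψ ↦ ⟨⟨·, η⟩⟩` is a bijection from `V_ψ(X,μ)`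
onto the dual of `V_φ(X,μ)`. -/
def ConjDual (μ : Measure X) (φ ψ : X → H) : Prop :=
  (∀ ξ η, MemV μ φ ξ → MemV μ ψ η →
      Integrable (fun x => ξ x * (starRingEnd ℂ) (η x)) μ) ∧
  (∀ η, MemV μ ψ η →
      IsBddLinearFunctional μ φ (fun ξ => ∫ x, ξ x * (starRingEnd ℂ) (η x) ∂μ)) ∧
  (∀ η η', MemV μ ψ η → MemV μ ψ η' →
      (∀ ξ, MemV μ φ ξ →
        ∫ x, ξ x * (starRingEnd ℂ) (η x) ∂μ = ∫ x, ξ x * (starRingEnd ℂ) (η' x) ∂μ) →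
      Tmap μ ψ (η - η') = 0) ∧
  (∀ F, IsBddLinearFunctional μ φ F →
      ∃ η, MemV μ ψ η ∧ ∀ ξ, MemV μ φ ξ → F ξ = ∫ x, ξ x * (starRingEnd ℂ) (η x) ∂μ)

lemma ciSup_inner_norm (h : H) :
    (⨆ g : {g : H // ‖g‖ ≤ 1}, ‖⟪(g : H), h⟫‖) = ‖h‖ := by
  have hne : Nonempty {g : H // ‖g‖ ≤ 1} := ⟨⟨0, by simp⟩⟩
  have hbdd : BddAbove (Set.range fun g : {g : H // ‖g‖ ≤ 1} => ‖⟪(g : H), h⟫‖) := by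
    refine ⟨‖h‖, ?_⟩
    rintro _ ⟨g, rfl⟩
    calc ‖⟪(g : H), h⟫‖ ≤ ‖(g : H)‖ * ‖h‖ := norm_inner_le_norm _ _
      _ ≤ 1 * ‖h‖ := by
          have := g.2
          nlinarith [norm_nonneg h]
      _ = ‖h‖ := one_mul _
  refine le_antisymm (ciSup_le fun g => ?_) ?_
  · calc ‖⟪(g : H), h⟫‖ ≤ ‖(g : H)‖ * ‖h‖ := norm_inner_le_norm _ _
      _ ≤ 1 * ‖h‖ := by
          have := g.2
          nlinarith [norm_nonneg h]
      _ = ‖h‖ := one_mul _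
  · rcases eq_or_ne h 0 with rfl | hh
    · simpa using le_ciSup hbdd ⟨⟨0, by simp⟩, by simp⟩
    · have hg : ‖(((‖h‖ : ℂ))⁻¹ • h)‖ ≤ 1 := by
        rw [norm_smul, norm_inv, Complex.norm_real, norm_norm,
          inv_mul_cancel₀ (norm_ne_zero_iff.2 hh)]
      have hle := le_ciSup hbdd ⟨((‖h‖ : ℂ))⁻¹ • h, hg⟩
      have hval : ‖⟪((((‖h‖ : ℂ))⁻¹ • h : H)), h⟫‖ = ‖h‖ := by
        rw [inner_smul_left, map_inv₀, norm_mul, norm_inv, inner_self_eq_norm_sq_to_K,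
          norm_pow]
        simp only [RCLike.norm_conj, RCLike.norm_ofReal, abs_norm]
        field_simp
        rw [Complex.norm_real, norm_norm, div_self (norm_ne_zero_iff.2 hh)]
      exact hval.symm.le.trans hle

lemma inner_Tmap (μ : Measure X) (χ : X → H) {ζ : X → ℂ} (hζ : MemV μ χ ζ) (g : H) :
    ⟪g, Tmap μ χ ζ⟫ = ∫ x, ζ x * ⟪g, χ x⟫ ∂μ := by
  have h1 : ⟪Tmap μ χ ζ, g⟫ = ∫ x, (starRingEnd ℂ) (ζ x) * ⟪χ x, g⟫ ∂μ := by
    rw [Tmap, dif_pos hζ]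
    exact InnerProductSpace.toDual_symm_apply
  have : ⟪g, Tmap μ χ ζ⟫ = (starRingEnd ℂ) (⟪Tmap μ χ ζ, g⟫) := (inner_conj_symm _ _).symm
  rw [this, h1, ← integral_conj]
  congr 1
  funext x
  simp [map_mul]

lemma Vnorm_eq_norm_Tmap (μ : Measure X) (χ : X → H) {ζ : X → ℂ} (hζ : MemV μ χ ζ) :
    Vnorm μ χ ζ = ‖Tmap μ χ ζ‖ := by
  rw [Vnorm, ← ciSup_inner_norm (Tmap μ χ ζ)]
  congr 1
  funext g
  rw [inner_Tmap μ χ hζ]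

/-- Let `(ψ,φ)` be a reproducing pair (with operator `S = S_{ψ,φ}`) and
`Ĉ_{ψ,φ}f := [⟨f,ψ(·)⟩]_φ`. Then (i) `m‖f‖ ≤ ‖Ĉ_{ψ,φ}f‖_φ ≤ M‖f‖` with `m = ‖S⁻¹‖⁻¹`,
`M = ‖S‖`; hence the range of `Ĉ_{ψ,φ}` is closed in `V_φ(X,μ)`; (ii) every `[η]_ψ` defines a
bounded linear functional on `Ran Ĉ_{ψ,φ}` with the stated bound. -/
theorem statement8 [Nontrivial H] (μ : Measure X) [μ.Regular] (ψ φ : X → H) (S : H ≃L[ℂ] H)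
    (hψ : WeaklyMeasurable ψ) (hφ : WeaklyMeasurable φ)
    (hΩ : ∀ f g : H, Integrable (fun x => ⟪ψ x, f⟫ * ⟪g, φ x⟫) μ)
    (hS : IsAnalysisOp μ ψ φ S) :
    -- (i) with the explicit constants `m = ‖S⁻¹‖⁻¹` and `M = ‖S‖`
    (∀ f : H, ‖f‖ ≤ ‖(S.symm : H →L[ℂ] H)‖ * Vnorm μ φ (Cpsi ψ f) ∧
        Vnorm μ φ (Cpsi ψ f) ≤ ‖(S : H →L[ℂ] H)‖ * ‖f‖) ∧
    (∃ m M : ℝ, 0 < m ∧ 0 < M ∧ ∀ f : H,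
        m * ‖f‖ ≤ Vnorm μ φ (Cpsi ψ f) ∧ Vnorm μ φ (Cpsi ψ f) ≤ M * ‖f‖) ∧
    -- `Ran Ĉ_{ψ,φ}` is closed in `V_φ(X,μ)`
    (∀ (f : ℕ → H) (ξ : X → ℂ), MemV μ φ ξ →
        Tendsto (fun n => Vnorm μ φ (Cpsi ψ (f n) - ξ)) atTop (𝓝 0) →
        ∃ f₀ : H, Tmap μ φ (Cpsi ψ f₀ - ξ) = 0) ∧
    -- (ii)
    (∀ η, MemV μ ψ η → ∀ f : H,
        ‖∫ x, ⟪ψ x, f⟫ * (starRingEnd ℂ) (η x) ∂μ‖ ≤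
          ‖(S.symm : H →L[ℂ] H)‖ * Vnorm μ φ (Cpsi ψ f) * Vnorm μ ψ η) := by
  -- key identities
  have key1 : ∀ f g : H, ∫ x, Cpsi ψ f x * ⟪g, φ x⟫ ∂μ = ⟪g, S f⟫ := by
    intro f g
    rw [hS f g]
    rfl
  have hMemC : ∀ f : H, MemV μ φ (Cpsi ψ f) := by
    intro f
    refine ⟨hψ f, fun g => hΩ f g, ‖S f‖, fun g => ?_⟩
    rw [key1 f g]
    calc ‖⟪g, S f⟫‖ ≤ ‖g‖ * ‖S f‖ := norm_inner_le_norm _ _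
      _ = ‖S f‖ * ‖g‖ := mul_comm _ _
  have hVC : ∀ f : H, Vnorm μ φ (Cpsi ψ f) = ‖S f‖ := by
    intro f
    rw [Vnorm, ← ciSup_inner_norm (S f)]
    congr 1
    funext g
    rw [key1 f g]
  have hlow : ∀ f : H, ‖f‖ ≤ ‖(S.symm : H →L[ℂ] H)‖ * Vnorm μ φ (Cpsi ψ f) := by
    intro f
    rw [hVC]
    calc ‖f‖ = ‖(S.symm : H →L[ℂ] H) (S f)‖ := by simp
      _ ≤ ‖(S.symm : H →L[ℂ] H)‖ * ‖S f‖ := (S.symm : H →L[ℂ] H).le_opNorm _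
  have hup : ∀ f : H, Vnorm μ φ (Cpsi ψ f) ≤ ‖(S : H →L[ℂ] H)‖ * ‖f‖ := by
    intro f
    rw [hVC]
    exact (S : H →L[ℂ] H).le_opNorm f
  obtain ⟨x0, hx0⟩ := exists_ne (0 : H)
  have hx0n : 0 < ‖x0‖ := norm_pos_iff.2 hx0
  have hsympos : 0 < ‖(S.symm : H →L[ℂ] H)‖ := by
    by_contra hcon
    push_neg at hcon
    have := hlow x0
    have hV := hVC x0
    nlinarith [norm_nonneg (S x0), hup x0, norm_nonneg ((S : H →L[ℂ] H))]
  have hSpos : 0 < ‖(S : H →L[ℂ] H)‖ := by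
    by_contra hcon
    push_neg at hcon
    have h1 := hup x0
    have h2 := hlow x0
    have hV0 : Vnorm μ φ (Cpsi ψ x0) ≤ 0 := by nlinarith
    have h3 : ‖(S.symm : H →L[ℂ] H)‖ * Vnorm μ φ (Cpsi ψ x0) ≤ ‖(S.symm : H →L[ℂ] H)‖ * 0 :=
      mul_le_mul_of_nonneg_left hV0 hsympos.le
    simp only [mul_zero] at h3
    linarith
  refine ⟨fun f => ⟨hlow f, hup f⟩, ?_, ?_, ?_⟩
  · refine ⟨‖(S.symm : H →L[ℂ] H)‖⁻¹, ‖(S : H →L[ℂ] H)‖, inv_pos.2 hsympos, hSpos,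
      fun f => ⟨?_, hup f⟩⟩
    have := hlow f
    rw [inv_mul_le_iff₀ hsympos]
    linarith
  · -- closedness of the range
    intro f ξ hξ _
    refine ⟨S.symm (Tmap μ φ ξ), ?_⟩
    set f₀ : H := S.symm (Tmap μ φ ξ) with hf₀
    have hint0 : ∀ g : H, ∫ x, (Cpsi ψ f₀ - ξ) x * ⟪g, φ x⟫ ∂μ = 0 := by
      intro g
      have hi1 := (hMemC f₀).2.1 g
      have hi2 := hξ.2.1 g
      have : ∫ x, (Cpsi ψ f₀ - ξ) x * ⟪g, φ x⟫ ∂μ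
          = (∫ x, Cpsi ψ f₀ x * ⟪g, φ x⟫ ∂μ) - ∫ x, ξ x * ⟪g, φ x⟫ ∂μ := by
        rw [← integral_sub hi1 hi2]
        congr 1
        funext x
        simp [sub_mul]
      rw [this, key1 f₀ g, ← inner_Tmap μ φ hξ g, hf₀]
      simp
    have hmem : MemV μ φ (Cpsi ψ f₀ - ξ) := by
      refine ⟨((hMemC f₀).1).sub hξ.1, fun g => ?_, 0, fun g => ?_⟩
      · have := ((hMemC f₀).2.1 g).sub (hξ.2.1 g)
        refine this.congr (Eventually.of_forall fun x => ?_)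
        simp [sub_mul]
      · rw [hint0 g]
        simp
    have hz : ∀ g : H, ⟪g, Tmap μ φ (Cpsi ψ f₀ - ξ)⟫ = 0 := by
      intro g
      rw [inner_Tmap μ φ hmem g, hint0 g]
    have := hz (Tmap μ φ (Cpsi ψ f₀ - ξ))
    rwa [inner_self_eq_zero] at this
  · -- (ii)
    intro η hη f
    have hint : ∫ x, ⟪ψ x, f⟫ * (starRingEnd ℂ) (η x) ∂μ = ⟪Tmap μ ψ η, f⟫ := by
      have h1 : ⟪f, Tmap μ ψ η⟫ = ∫ x, η x * ⟪f, ψ x⟫ ∂μ := inner_Tmap μ ψ hη f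
      have h2 : ⟪Tmap μ ψ η, f⟫ = (starRingEnd ℂ) (⟪f, Tmap μ ψ η⟫) :=
        (inner_conj_symm _ _).symm
      rw [h2, h1, ← integral_conj]
      congr 1
      funext x
      simp [map_mul, mul_comm]
    rw [hint, Vnorm_eq_norm_Tmap μ ψ hη]
    have hcs : ‖⟪Tmap μ ψ η, f⟫‖ ≤ ‖Tmap μ ψ η‖ * ‖f‖ := norm_inner_le_norm _ _
    have hf : ‖f‖ ≤ ‖(S.symm : H →L[ℂ] H)‖ * Vnorm μ φ (Cpsi ψ f) := hlow f
    nlinarith [norm_nonneg (Tmap μ ψ η), norm_nonneg f,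
      mul_le_mul_of_nonneg_left hf (norm_nonneg (Tmap μ ψ η))]
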